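/- arXiv:1804.10449 — 3 statements merged into one kernel-verified Lean document; each statement's English description precedes it below -/
import Mathlib

section
/- Let α, β, γ, δ ∈ (0, π) with α ≠ β and γ ≠ δ, and let p(γ), p(δ) be the γ- and δ-projections of ⟦0,1⟧_{α,β} (so p(γ) ≠ p(δ)). Then for all r, s ∈ ℝ: ⟦r,s⟧_{γ,δ} = ⟦(s·p(γ) − r·p(δ))/(p(γ) − p(δ)), (r − s + s·p(γ) − r·p(δ))/(p(γ) − p(δ))⟧_{α,β}. -/
open Real Complex Set

/-- The `θ`-projection of `z`: the unique real `x` with `z ∈ x + ℝ·exp(iθ)`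
(for `θ ∈ (0,π)`); explicitly `x = Re z − Im z · cos θ / sin θ`. -/
noncomputable def proj (θ : ℝ) (z : ℂ) : ℝ := z.re - z.im * Real.cos θ / Real.sin θ

/-- `inter α β r s` is the (unique, for distinct `α β ∈ (0,π)`) complex number
with `α`-projection `r` and `β`-projection `s`, i.e. `⟦r,s⟧_{α,β}`. -/
noncomputable def inter (α β r s : ℝ) : ℂ :=
  Classical.epsilon fun z : ℂ => proj α z = r ∧ proj β z = s

/-- The line through `z` with slope (angle) `θ`. -/
def lineThru (z : ℂ) (θ : ℝ) : Set ℂ := {w | ∃ t : ℝ, w = z + t * Complex.exp (θ * Complex.I)}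

/-- The recursively defined stages of the origami set. -/
def origamiStep (U : Set ℝ) : ℕ → Set ℂ
  | 0 => {0, 1}
  | k + 1 => {w | ∃ z ∈ origamiStep U k, ∃ z' ∈ origamiStep U k,
      ∃ γ ∈ U, ∃ γ' ∈ U, γ ≠ γ' ∧ w ∈ lineThru z γ ∧ w ∈ lineThru z' γ'}

/-- The origami set `M(U)`. -/
def origami (U : Set ℝ) : Set ℂ := ⋃ k, origamiStep U k

/-- The real part `M_ℝ = M(U) ∩ ℝ`, viewed as a set of reals. -/
def origamiR (U : Set ℝ) : Set ℝ := {x : ℝ | (x : ℂ) ∈ origami U}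

lemma cot_ne (α β : ℝ) (hα : α ∈ Set.Ioo 0 Real.pi) (hβ : β ∈ Set.Ioo 0 Real.pi)
    (hαβ : α ≠ β) : Real.cos α / Real.sin α ≠ Real.cos β / Real.sin β := by
  have hsα := Real.sin_pos_of_pos_of_lt_pi hα.1 hα.2
  have hsβ := Real.sin_pos_of_pos_of_lt_pi hβ.1 hβ.2
  intro h
  have h2 : Real.sin (β - α) = 0 := by
    have := div_eq_div_iff hsα.ne' hsβ.ne' |>.mp h
    rw [Real.sin_sub]; nlinarith
  have : β - α = 0 := by
    rw [Real.sin_eq_zero_iff_of_lt_of_lt (by linarith [hα.2, hβ.1]) (by linarith [hα.1, hβ.2])] at h2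
    exact h2
  exact hαβ (by linarith)

lemma inter_exists (α β : ℝ) (hα : α ∈ Set.Ioo 0 Real.pi) (hβ : β ∈ Set.Ioo 0 Real.pi)
    (hαβ : α ≠ β) (r s : ℝ) : ∃ z : ℂ, proj α z = r ∧ proj β z = s := by
  have hsα := (Real.sin_pos_of_pos_of_lt_pi hα.1 hα.2).ne'
  have hsβ := (Real.sin_pos_of_pos_of_lt_pi hβ.1 hβ.2).ne'
  have hc := cot_ne α β hα hβ hαβ
  set cA := Real.cos α / Real.sin α
  set cB := Real.cos β / Real.sin β
  set im := (r - s) / (cB - cA) with him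
  refine ⟨⟨r + im * cA, im⟩, ?_, ?_⟩
  · simp [proj, div_div_eq_mul_div, mul_div_assoc, cA]
  · show r + im * cA - im * Real.cos β / Real.sin β = s
    have : im * Real.cos β / Real.sin β = im * cB := by rw [mul_div_assoc]
    rw [this, him]
    have hne : cB - cA ≠ 0 := sub_ne_zero.mpr (Ne.symm hc)
    field_simp
    ring

lemma inter_spec (α β : ℝ) (hα : α ∈ Set.Ioo 0 Real.pi) (hβ : β ∈ Set.Ioo 0 Real.pi)
    (hαβ : α ≠ β) (r s : ℝ) : proj α (inter α β r s) = r ∧ proj β (inter α β r s) = s :=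
  Classical.epsilon_spec (inter_exists α β hα hβ hαβ r s)

lemma proj_inj (α β : ℝ) (hα : α ∈ Set.Ioo 0 Real.pi) (hβ : β ∈ Set.Ioo 0 Real.pi)
    (hαβ : α ≠ β) {z w : ℂ} (h1 : proj α z = proj α w) (h2 : proj β z = proj β w) :
    z = w := by
  have hsα := (Real.sin_pos_of_pos_of_lt_pi hα.1 hα.2).ne'
  have hsβ := (Real.sin_pos_of_pos_of_lt_pi hβ.1 hβ.2).ne'
  have hc := cot_ne α β hα hβ hαβ
  simp only [proj] at h1 h2
  have him : z.im = w.im := by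
    have h3 : (z.im - w.im) * (Real.cos α / Real.sin α - Real.cos β / Real.sin β) = 0 := by
      field_simp at h1 h2 ⊢
      linear_combination Real.sin α * h2 - Real.sin β * h1
    rcases mul_eq_zero.mp h3 with h | h
    · linarith [sub_eq_zero.mp h]
    · exact absurd (sub_eq_zero.mp h) hc
  have hre : z.re = w.re := by rw [him] at h1; linarith
  exact Complex.ext hre him

lemma proj_affine (θ a b : ℝ) (z : ℂ) :
    proj θ ((a : ℂ) * (1 - z) + (b : ℂ) * z) = a * (1 - proj θ z) + b * proj θ z := by
  simp only [proj, Complex.add_re, Complex.add_im, Complex.mul_re, Complex.mul_im,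
    Complex.sub_re, Complex.sub_im, Complex.one_re, Complex.one_im, Complex.ofReal_re,
    Complex.ofReal_im]
  ring

theorem coord_transform_backward (α β γ δ : ℝ)
    (hα : α ∈ Set.Ioo 0 Real.pi) (hβ : β ∈ Set.Ioo 0 Real.pi)
    (hγ : γ ∈ Set.Ioo 0 Real.pi) (hδ : δ ∈ Set.Ioo 0 Real.pi)
    (hαβ : α ≠ β) (hγδ : γ ≠ δ) (r s : ℝ) :
    inter γ δ r s =
      inter α β
        ((s * proj γ (inter α β 0 1) - r * proj δ (inter α β 0 1)) /
          (proj γ (inter α β 0 1) - proj δ (inter α β 0 1)))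
        ((r - s + s * proj γ (inter α β 0 1) - r * proj δ (inter α β 0 1)) /
          (proj γ (inter α β 0 1) - proj δ (inter α β 0 1))) := by
  set B := inter α β 0 1 with hBdef
  obtain ⟨hB0, hB1⟩ := inter_spec α β hα hβ hαβ 0 1
  set pγ := proj γ B
  set pδ := proj δ B
  have hsγ := (Real.sin_pos_of_pos_of_lt_pi hγ.1 hγ.2).ne'
  have hsδ := (Real.sin_pos_of_pos_of_lt_pi hδ.1 hδ.2).ne'
  have hBim : B.im ≠ 0 := by
    intro h
    rw [proj, h] at hB0 hB1
    simp at hB0 hB1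
    rw [hB0] at hB1; norm_num at hB1
  have hne : pγ - pδ ≠ 0 := by
    have : pγ - pδ = B.im * (Real.cos δ / Real.sin δ - Real.cos γ / Real.sin γ) := by
      simp only [pγ, pδ, proj]; ring
    rw [this]
    exact mul_ne_zero hBim (sub_ne_zero.mpr fun h => cot_ne δ γ hδ hγ hγδ.symm h)
  set a := (s * pγ - r * pδ) / (pγ - pδ) with ha
  set b := (r - s + s * pγ - r * pδ) / (pγ - pδ) with hb
  have hW : inter α β a b = (a : ℂ) * (1 - B) + (b : ℂ) * B := by
    obtain ⟨h1, h2⟩ := inter_spec α β hα hβ hαβ a b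
    refine proj_inj α β hα hβ hαβ ?_ ?_
    · rw [h1, proj_affine, hB0]; ring
    · rw [h2, proj_affine, hB1]; ring
  refine proj_inj γ δ hγ hδ hγδ ?_ ?_
  · rw [(inter_spec γ δ hγ hδ hγδ r s).1, hW, proj_affine]
    show r = a * (1 - pγ) + b * pγ
    rw [ha, hb]; field_simp; ring
  · rw [(inter_spec γ δ hγ hδ hγδ r s).2, hW, proj_affine]
    show s = a * (1 - pδ) + b * pδ
    rw [ha, hb]; field_simp; ring
end

section
/- Let U ⊆ [0, π) with 0 ∈ U and |U| ≥ 3, fix distinct α, β ∈ U \ {0}, let p(γ) be the γ-projection of ⟦0,1⟧ for γ ∈ U \ {0}, and set Δ = { p(γ) − p(δ) : γ ≠ δ in U \ {0} }. Then M_ℝ = ℤ[Δ, Δ⁻¹]; in particular, the real part M_ℝ of any origami set M(U) is a subring of ℝ. -/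
open Real Complex Set

/-! ### Auxiliary lemmas -/

noncomputable def ct (θ : ℝ) : ℝ := Real.cos θ / Real.sin θ

lemma proj_eq (θ : ℝ) (z : ℂ) : proj θ z = z.re - z.im * ct θ := by
  rw [proj, ct, mul_div_assoc]

lemma proj_ofReal (θ : ℝ) (r : ℝ) : proj θ (r : ℂ) = r := by simp [proj]

lemma ct_inj {γ δ : ℝ} (hγ1 : 0 < γ) (hγ2 : γ < π) (hδ1 : 0 < δ) (hδ2 : δ < π)
    (h : ct γ = ct δ) : γ = δ := by
  have hsγ := Real.sin_pos_of_pos_of_lt_pi hγ1 hγ2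
  have hsδ := Real.sin_pos_of_pos_of_lt_pi hδ1 hδ2
  have h2 : Real.cos γ * Real.sin δ = Real.cos δ * Real.sin γ := by
    rw [ct, ct, div_eq_div_iff (ne_of_gt hsγ) (ne_of_gt hsδ)] at h
    linarith
  have h3 : Real.sin (δ - γ) = 0 := by
    rw [Real.sin_sub]; nlinarith
  have h4 : δ - γ = 0 := by
    have := Real.sin_eq_zero_iff_of_lt_of_lt (x := δ - γ) (by linarith) (by linarith)
    exact this.mp h3
  linarith

lemma mem_lineThru_iff {θ : ℝ} (h1 : 0 < θ) (h2 : θ < π) (z w : ℂ) :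
    w ∈ lineThru z θ ↔ proj θ w = proj θ z := by
  have hs := (Real.sin_pos_of_pos_of_lt_pi h1 h2).ne'
  constructor
  · rintro ⟨t, rfl⟩
    simp only [proj, Complex.add_re, Complex.add_im, Complex.mul_re, Complex.mul_im,
      Complex.ofReal_re, Complex.ofReal_im, Complex.exp_ofReal_mul_I_re,
      Complex.exp_ofReal_mul_I_im]
    field_simp
    ring
  · intro h
    refine ⟨(w.im - z.im) / Real.sin θ, ?_⟩
    rw [proj, proj] at h
    have h' : w.re * Real.sin θ - w.im * Real.cos θ = z.re * Real.sin θ - z.im * Real.cos θ := by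
      field_simp at h; linarith
    apply Complex.ext
    · simp only [Complex.add_re, Complex.mul_re, Complex.ofReal_re, Complex.ofReal_im,
        Complex.exp_ofReal_mul_I_re, Complex.exp_ofReal_mul_I_im]
      field_simp
      linarith [h']
    · simp only [Complex.add_im, Complex.mul_im, Complex.ofReal_re, Complex.ofReal_im,
        Complex.exp_ofReal_mul_I_re, Complex.exp_ofReal_mul_I_im]
      field_simp
      ring

lemma mem_lineThru_zero_iff (z w : ℂ) : w ∈ lineThru z 0 ↔ w.im = z.im := by
  constructor
  · rintro ⟨t, rfl⟩; simp
  · intro h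
    exact ⟨w.re - z.re, by apply Complex.ext <;> simp [h]⟩

lemma self_mem_lineThru (z : ℂ) (θ : ℝ) : z ∈ lineThru z θ := ⟨0, by simp⟩

lemma origamiStep_succ_mono {U : Set ℝ} {γ γ' : ℝ} (hγ : γ ∈ U) (hγ' : γ' ∈ U)
    (hne : γ ≠ γ') (k : ℕ) : origamiStep U k ⊆ origamiStep U (k + 1) := by
  intro z hz
  exact ⟨z, hz, z, hz, γ, hγ, γ', hγ', hne, self_mem_lineThru z γ, self_mem_lineThru z γ'⟩

lemma origamiStep_mono {U : Set ℝ} {γ γ' : ℝ} (hγ : γ ∈ U) (hγ' : γ' ∈ U)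
    (hne : γ ≠ γ') {k l : ℕ} (h : k ≤ l) : origamiStep U k ⊆ origamiStep U l := by
  induction h with
  | refl => exact subset_rfl
  | step h ih => exact ih.trans (origamiStep_succ_mono hγ hγ' hne _)

lemma origami_closed {U : Set ℝ} {γ γ' : ℝ} (hγ : γ ∈ U) (hγ' : γ' ∈ U) (hne : γ ≠ γ')
    {z z' w : ℂ} (hz : z ∈ origami U) (hz' : z' ∈ origami U)
    (h1 : w ∈ lineThru z γ) (h2 : w ∈ lineThru z' γ') : w ∈ origami U := by
  obtain ⟨k, hk⟩ := mem_iUnion.mp hz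
  obtain ⟨k', hk'⟩ := mem_iUnion.mp hz'
  exact mem_iUnion.mpr ⟨max k k' + 1,
    z, origamiStep_mono hγ hγ' hne (le_max_left k k') hk,
    z', origamiStep_mono hγ hγ' hne (le_max_right k k') hk',
    γ, hγ, γ', hγ', hne, h1, h2⟩

lemma zero_mem_origamiR (U : Set ℝ) : (0 : ℝ) ∈ origamiR U := by
  show ((0:ℝ):ℂ) ∈ origami U
  exact mem_iUnion.mpr ⟨0, by simp [origamiStep]⟩

lemma one_mem_origamiR (U : Set ℝ) : (1 : ℝ) ∈ origamiR U := by
  show ((1:ℝ):ℂ) ∈ origami U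
  exact mem_iUnion.mpr ⟨0, by simp [origamiStep]⟩

lemma mk_re (x y : ℝ) : ((x : ℂ) + (y : ℂ) * Complex.I).re = x := by simp
lemma mk_im (x y : ℝ) : ((x : ℂ) + (y : ℂ) * Complex.I).im = y := by simp

lemma opB {U : Set ℝ} (hU : U ⊆ Set.Ico 0 π) (h0 : (0:ℝ) ∈ U)
    {γ₀ δ₀ γ' η : ℝ} (hγ₀ : γ₀ ∈ U) (hδ₀ : δ₀ ∈ U) (hγ' : γ' ∈ U) (hη : η ∈ U)
    (hγ₀0 : γ₀ ≠ 0) (hδ₀0 : δ₀ ≠ 0) (hγ'0 : γ' ≠ 0) (hη0 : η ≠ 0) (hne : γ₀ ≠ δ₀)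
    {r s t : ℝ} (hr : r ∈ origamiR U) (hs : s ∈ origamiR U) (ht : t ∈ origamiR U) :
    t + (r - s) / (ct δ₀ - ct γ₀) * (ct γ' - ct η) ∈ origamiR U := by
  have hIoo : ∀ θ ∈ U, θ ≠ 0 → 0 < θ ∧ θ < π := fun θ hθ hθ0 =>
    ⟨lt_of_le_of_ne (hU hθ).1 (Ne.symm hθ0), (hU hθ).2⟩
  obtain ⟨hγ₀1, hγ₀2⟩ := hIoo _ hγ₀ hγ₀0
  obtain ⟨hδ₀1, hδ₀2⟩ := hIoo _ hδ₀ hδ₀0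
  obtain ⟨hγ'1, hγ'2⟩ := hIoo _ hγ' hγ'0
  obtain ⟨hη1, hη2⟩ := hIoo _ hη hη0
  have hct : ct δ₀ - ct γ₀ ≠ 0 := fun h =>
    hne (ct_inj hγ₀1 hγ₀2 hδ₀1 hδ₀2 (by linarith [sub_eq_zero.mp h]))
  set y : ℝ := (r - s) / (ct δ₀ - ct γ₀) with hy
  have hymul : y * (ct δ₀ - ct γ₀) = r - s := div_mul_cancel₀ _ hct
  set z : ℂ := ((r + y * ct γ₀ : ℝ) : ℂ) + (y : ℂ) * Complex.I with hzdef
  have hz : z ∈ origami U := by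
    refine origami_closed hγ₀ hδ₀ hne hr hs ?_ ?_
    · rw [mem_lineThru_iff hγ₀1 hγ₀2]
      rw [proj_eq, proj_ofReal, hzdef, mk_re, mk_im]; ring
    · rw [mem_lineThru_iff hδ₀1 hδ₀2]
      rw [proj_eq, proj_ofReal, hzdef, mk_re, mk_im]; nlinarith [hymul]
  set w : ℂ := ((t + y * ct γ' : ℝ) : ℂ) + (y : ℂ) * Complex.I with hwdef
  have hw : w ∈ origami U := by
    refine origami_closed h0 hγ' (Ne.symm hγ'0) hz ht ?_ ?_
    · rw [mem_lineThru_zero_iff, hwdef, hzdef, mk_im, mk_im]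
    · rw [mem_lineThru_iff hγ'1 hγ'2]
      rw [proj_eq, proj_ofReal, hwdef, mk_re, mk_im]; ring
  show ((t + y * (ct γ' - ct η) : ℝ) : ℂ) ∈ origami U
  refine origami_closed hη h0 hη0 hw (zero_mem_origamiR U) ?_ ?_
  · rw [mem_lineThru_iff hη1 hη2]
    rw [proj_eq, proj_eq, hwdef, mk_re, mk_im]
    simp only [Complex.ofReal_re, Complex.ofReal_im]
    ring
  · rw [mem_lineThru_zero_iff]
    simp

theorem origamiR_eq_closure (U : Set ℝ) (hU : U ⊆ Set.Ico 0 Real.pi) (h0 : (0 : ℝ) ∈ U)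
    (hcard : 3 ≤ U.encard) (α β : ℝ) (hα : α ∈ U) (hβ : β ∈ U)
    (hα0 : α ≠ 0) (hβ0 : β ≠ 0) (hαβ : α ≠ β)
    (Δ : Set ℝ)
    (hΔ : Δ = {x : ℝ | ∃ γ ∈ U \ {0}, ∃ δ ∈ U \ {0},
        γ ≠ δ ∧ x = proj γ (inter α β 0 1) - proj δ (inter α β 0 1)}) :
    origamiR U = (Subring.closure (Δ ∪ (fun d : ℝ => d⁻¹) '' Δ) : Set ℝ) := by
  have hIoo : ∀ θ ∈ U, θ ≠ 0 → 0 < θ ∧ θ < π := fun θ hθ hθ0 =>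
    ⟨lt_of_le_of_ne (hU hθ).1 (Ne.symm hθ0), (hU hθ).2⟩
  obtain ⟨hα1, hα2⟩ := hIoo α hα hα0
  obtain ⟨hβ1, hβ2⟩ := hIoo β hβ hβ0
  set K : ℝ := ct α - ct β with hKdef
  have hK : K ≠ 0 := fun h =>
    hαβ (ct_inj hα1 hα2 hβ1 hβ2 (by linarith [sub_eq_zero.mp h]))
  have hctne : ∀ γ ∈ U, γ ≠ 0 → ∀ δ ∈ U, δ ≠ 0 → γ ≠ δ → ct δ - ct γ ≠ 0 := by
    intro γ hγU hγ0 δ hδU hδ0 hgd h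
    obtain ⟨hg1, hg2⟩ := hIoo γ hγU hγ0
    obtain ⟨hd1, hd2⟩ := hIoo δ hδU hδ0
    exact hgd (ct_inj hg1 hg2 hd1 hd2 (by linarith [sub_eq_zero.mp h]))
  -- the epsilon-defined intersection point
  have hex : ∃ z : ℂ, proj α z = 0 ∧ proj β z = 1 := by
    refine ⟨((ct α / K : ℝ) : ℂ) + ((1 / K : ℝ) : ℂ) * Complex.I, ?_, ?_⟩
    · rw [proj_eq, mk_re, mk_im]; field_simp; ring
    · rw [proj_eq, mk_re, mk_im]; field_simp; exact hKdef.symm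
  set Iz : ℂ := inter α β 0 1 with hIzdef
  have hI : proj α Iz = 0 ∧ proj β Iz = 1 := Classical.epsilon_spec hex
  have hImK : Iz.im * K = 1 := by
    have h1 := hI.1; have h2 := hI.2
    rw [proj_eq] at h1 h2
    have : Iz.im * K = Iz.im * ct α - Iz.im * ct β := by rw [hKdef]; ring
    linarith
  have hIm : Iz.im = 1 / K := by rw [eq_div_iff hK]; exact hImK
  -- description of Δ
  have hΔform : ∀ x : ℝ, x ∈ Δ ↔ ∃ γ, γ ∈ U ∧ γ ≠ 0 ∧ ∃ δ, δ ∈ U ∧ δ ≠ 0 ∧ γ ≠ δ ∧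
      x = (ct δ - ct γ) / K := by
    intro x
    rw [hΔ]
    constructor
    · rintro ⟨γ, ⟨hγU, hγ0⟩, δ, ⟨hδU, hδ0⟩, hgd, hx⟩
      refine ⟨γ, hγU, by simpa using hγ0, δ, hδU, by simpa using hδ0, hgd, ?_⟩
      rw [hx, proj_eq, proj_eq, hIm]; ring
    · rintro ⟨γ, hγU, hγ0, δ, hδU, hδ0, hgd, hx⟩
      refine ⟨γ, ⟨hγU, by simpa using hγ0⟩, δ, ⟨hδU, by simpa using hδ0⟩, hgd, ?_⟩
      rw [hx, proj_eq, proj_eq, hIm]; ring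
  set G : Set ℝ := Δ ∪ (fun d : ℝ => d⁻¹) '' Δ with hGdef
  set Rc : Subring ℝ := Subring.closure G with hRcdef
  have hgenΔ : ∀ γ ∈ U, γ ≠ 0 → ∀ δ ∈ U, δ ≠ 0 → γ ≠ δ → (ct δ - ct γ) / K ∈ Rc :=
    fun γ hγU hγ0 δ hδU hδ0 hgd => Subring.subset_closure
      (Or.inl ((hΔform _).mpr ⟨γ, hγU, hγ0, δ, hδU, hδ0, hgd, rfl⟩))
  have hgenInv : ∀ γ ∈ U, γ ≠ 0 → ∀ δ ∈ U, δ ≠ 0 → γ ≠ δ → ((ct δ - ct γ) / K)⁻¹ ∈ Rc :=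
    fun γ hγU hγ0 δ hδU hδ0 hgd => Subring.subset_closure
      (Or.inr ⟨(ct δ - ct γ) / K, (hΔform _).mpr ⟨γ, hγU, hγ0, δ, hδU, hδ0, hgd, rfl⟩, rfl⟩)
  -- forward inclusion: every origami point has controlled coordinates
  have projmem : ∀ θ ∈ U, θ ≠ 0 → ∀ v : ℂ, proj α v ∈ Rc → v.im * K ∈ Rc →
      proj θ v ∈ Rc := by
    intro θ hθU hθ0 v h1 h2
    have he : (ct α - ct θ) / K ∈ Rc := by
      by_cases hθα : θ = α
      · subst hθα; simpa using Subring.zero_mem Rc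
      · exact hgenΔ θ hθU hθ0 α hα hα0 hθα
    have hrw : proj θ v = proj α v + (v.im * K) * ((ct α - ct θ) / K) := by
      rw [proj_eq, proj_eq]; field_simp; ring
    rw [hrw]
    exact add_mem h1 (mul_mem h2 he)
  have projback : ∀ θ ∈ U, θ ≠ 0 → ∀ v : ℂ, proj θ v ∈ Rc → v.im * K ∈ Rc →
      proj α v ∈ Rc := by
    intro θ hθU hθ0 v h1 h2
    have he : (ct α - ct θ) / K ∈ Rc := by
      by_cases hθα : θ = α
      · subst hθα; simpa using Subring.zero_mem Rc
      · exact hgenΔ θ hθU hθ0 α hα hα0 hθα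
    have hrw : proj α v = proj θ v - (v.im * K) * ((ct α - ct θ) / K) := by
      rw [proj_eq, proj_eq]; field_simp; ring
    rw [hrw]
    exact sub_mem h1 (mul_mem h2 he)
  have main : ∀ k : ℕ, ∀ z ∈ origamiStep U k, proj α z ∈ Rc ∧ z.im * K ∈ Rc := by
    intro k
    induction k with
    | zero =>
      rintro z (rfl | rfl)
      · refine ⟨?_, ?_⟩
        · have e : proj α (0 : ℂ) = 0 := by simp [proj]
          rw [e]; exact zero_mem Rc
        · have e : (0 : ℂ).im * K = 0 := by simp
          rw [e]; exact zero_mem Rc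
      · refine ⟨?_, ?_⟩
        · have e : proj α (1 : ℂ) = 1 := by simp [proj]
          rw [e]; exact one_mem Rc
        · have e : (1 : ℂ).im * K = 0 := by simp
          rw [e]; exact zero_mem Rc
    | succ k ih =>
      rintro w ⟨z, hz, z', hz', γ, hγU, γ', hγ'U, hne, hw1, hw2⟩
      obtain ⟨ha, hd⟩ := ih z hz
      obtain ⟨ha', hd'⟩ := ih z' hz'
      by_cases hγz : γ = 0
      · subst hγz
        have hγ'0 : γ' ≠ 0 := fun h => hne (h ▸ rfl)
        obtain ⟨hg1, hg2⟩ := hIoo γ' hγ'U hγ'0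
        have him : w.im = z.im := (mem_lineThru_zero_iff z w).mp hw1
        have hwd : w.im * K ∈ Rc := by rw [him]; exact hd
        have hp : proj γ' w = proj γ' z' := (mem_lineThru_iff hg1 hg2 z' w).mp hw2
        have hpw : proj γ' w ∈ Rc := by rw [hp]; exact projmem γ' hγ'U hγ'0 z' ha' hd'
        exact ⟨projback γ' hγ'U hγ'0 w hpw hwd, hwd⟩
      · by_cases hγ'z : γ' = 0
        · subst hγ'z
          obtain ⟨hg1, hg2⟩ := hIoo γ hγU hγz
          have him : w.im = z'.im := (mem_lineThru_zero_iff z' w).mp hw2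
          have hwd : w.im * K ∈ Rc := by rw [him]; exact hd'
          have hp : proj γ w = proj γ z := (mem_lineThru_iff hg1 hg2 z w).mp hw1
          have hpw : proj γ w ∈ Rc := by rw [hp]; exact projmem γ hγU hγz z ha hd
          exact ⟨projback γ hγU hγz w hpw hwd, hwd⟩
        · obtain ⟨hg1, hg2⟩ := hIoo γ hγU hγz
          obtain ⟨hg1', hg2'⟩ := hIoo γ' hγ'U hγ'z
          have hp : proj γ w = proj γ z := (mem_lineThru_iff hg1 hg2 z w).mp hw1
          have hp' : proj γ' w = proj γ' z' := (mem_lineThru_iff hg1' hg2' z' w).mp hw2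
          have hpw : proj γ w ∈ Rc := by rw [hp]; exact projmem γ hγU hγz z ha hd
          have hpw' : proj γ' w ∈ Rc := by rw [hp']; exact projmem γ' hγ'U hγ'z z' ha' hd'
          have hcne : ct γ' - ct γ ≠ 0 := hctne γ hγU hγz γ' hγ'U hγ'z hne
          have hwdrw : w.im * K = (proj γ w - proj γ' w) * ((ct γ' - ct γ) / K)⁻¹ := by
            rw [proj_eq, proj_eq, inv_div]; field_simp; ring
          have hwd : w.im * K ∈ Rc := by
            rw [hwdrw]
            exact mul_mem (sub_mem hpw hpw') (hgenInv γ hγU hγz γ' hγ'U hγ'z hne)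
          exact ⟨projback γ hγU hγz w hpw hwd, hwd⟩
  have dirA : origamiR U ⊆ (Rc : Set ℝ) := by
    intro x hx
    obtain ⟨k, hk⟩ := mem_iUnion.mp hx
    have := (main k _ hk).1
    rwa [proj_ofReal] at this
  -- reverse inclusion
  have haddM : ∀ a ∈ origamiR U, ∀ b ∈ origamiR U, a + b ∈ origamiR U := by
    intro a ha b hb
    have h := opB hU h0 hβ hα hα hβ hβ0 hα0 hα0 hβ0 (Ne.symm hαβ) hb
      (zero_mem_origamiR U) ha
    have e : a + b = a + (b - 0) / (ct α - ct β) * (ct α - ct β) := by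
      rw [sub_zero, div_mul_cancel₀ b (show ct α - ct β ≠ 0 from hK)]
    rwa [e]
  have hnegM : ∀ b ∈ origamiR U, -b ∈ origamiR U := by
    intro b hb
    have h := opB hU h0 hβ hα hβ hα hβ0 hα0 hβ0 hα0 (Ne.symm hαβ) hb
      (zero_mem_origamiR U) (zero_mem_origamiR U)
    have e : -b = 0 + (b - 0) / (ct α - ct β) * (ct β - ct α) := by
      rw [zero_add, sub_zero, ← neg_sub (ct α) (ct β), mul_neg,
        div_mul_cancel₀ b (show ct α - ct β ≠ 0 from hK)]
    rwa [e]
  have hmulΔ : ∀ x ∈ Δ, ∀ y ∈ origamiR U, x * y ∈ origamiR U := by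
    intro x hx y hy
    obtain ⟨γ, hγU, hγ0, δ, hδU, hδ0, hgd, rfl⟩ := (hΔform x).mp hx
    have h := opB hU h0 hβ hα hδU hγU hβ0 hα0 hδ0 hγ0 (Ne.symm hαβ) hy
      (zero_mem_origamiR U) (zero_mem_origamiR U)
    have e : (ct δ - ct γ) / K * y = 0 + (y - 0) / (ct α - ct β) * (ct δ - ct γ) := by
      rw [hKdef]; field_simp; ring
    rwa [e]
  have hmulInv : ∀ x ∈ Δ, ∀ y ∈ origamiR U, x⁻¹ * y ∈ origamiR U := by
    intro x hx y hy
    obtain ⟨γ, hγU, hγ0, δ, hδU, hδ0, hgd, rfl⟩ := (hΔform x).mp hx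
    have hcne : ct δ - ct γ ≠ 0 := hctne γ hγU hγ0 δ hδU hδ0 hgd
    have h := opB hU h0 hγU hδU hα hβ hγ0 hδ0 hα0 hβ0 hgd hy
      (zero_mem_origamiR U) (zero_mem_origamiR U)
    have e : ((ct δ - ct γ) / K)⁻¹ * y = 0 + (y - 0) / (ct δ - ct γ) * (ct α - ct β) := by
      rw [inv_div, hKdef]; field_simp; ring
    rwa [e]
  set T : Subring ℝ :=
    { carrier := {x : ℝ | x ∈ origamiR U ∧ ∀ y ∈ origamiR U, x * y ∈ origamiR U}
      zero_mem' := ⟨zero_mem_origamiR U, fun y hy => by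
        rw [zero_mul]; exact zero_mem_origamiR U⟩
      one_mem' := ⟨one_mem_origamiR U, fun y hy => by rwa [one_mul]⟩
      add_mem' := fun {a b} ha hb => ⟨haddM a ha.1 b hb.1, fun y hy => by
        rw [add_mul]; exact haddM _ (ha.2 y hy) _ (hb.2 y hy)⟩
      mul_mem' := fun {a b} ha hb => ⟨ha.2 b hb.1, fun y hy => by
        rw [mul_assoc]; exact ha.2 _ (hb.2 y hy)⟩
      neg_mem' := fun {a} ha => ⟨hnegM a ha.1, fun y hy => by
        rw [neg_mul]; exact hnegM _ (ha.2 y hy)⟩ } with hTdef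
  have hGT : G ⊆ (T : Set ℝ) := by
    rintro x (hx | ⟨d, hd, rfl⟩)
    · refine ⟨?_, fun y hy => hmulΔ x hx y hy⟩
      have := hmulΔ x hx 1 (one_mem_origamiR U)
      rwa [mul_one] at this
    · refine ⟨?_, fun y hy => hmulInv d hd y hy⟩
      have := hmulInv d hd 1 (one_mem_origamiR U)
      rwa [mul_one] at this
  have dirB : (Rc : Set ℝ) ⊆ origamiR U := by
    intro x hx
    have : x ∈ T := Subring.closure_le.mpr hGT hx
    exact this.1
  exact Set.Subset.antisymm dirA dirB
end

section
/- Let U ⊆ [0, π) with 0 ∈ U and |U| ≥ 3, fix distinct α, β ∈ U \ {0}, and set e = ⟦0,1⟧. Then the following are equivalent: (a) the origami set M(U) is a subring of ℂ; (b) e satisfies a monic quadratic polynomial with coefficients in M_ℝ; (c) sin²β/sin²(α−β) ∈ M_ℝ and 2·cos(α)·sin(β)/sin(α−β) ∈ M_ℝ; (d) sin²α/sin²(α−β) ∈ M_ℝ and sin²β/sin²(α−β) ∈ M_ℝ; (e) e·(1−e) ∈ M(U). -/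
open Real Complex Set

set_option linter.unusedSectionVars false

lemma expθ (θ : ℝ) : Complex.exp ((θ:ℂ) * Complex.I)
    = (Real.cos θ : ℂ) + (Real.sin θ : ℂ) * Complex.I := by
  rw [Complex.exp_mul_I, Complex.ofReal_cos, Complex.ofReal_sin]

lemma mem_lineThru_iff_s18 {z w : ℂ} {θ : ℝ} : w ∈ lineThru z θ ↔
    ∃ t : ℝ, w = z + t * ((Real.cos θ : ℂ) + (Real.sin θ : ℂ) * Complex.I) := by
  simp [lineThru, expθ]

section

variable {U : Set ℝ} {α β : ℝ} (hα : α ∈ U) (hβ : β ∈ U) (hαβ : α ≠ β)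

include hα hβ hαβ in
lemma step_mono : ∀ k, origamiStep U k ⊆ origamiStep U (k + 1) := by
  intro k
  induction k with
  | zero =>
    intro w hw
    refine ⟨w, hw, w, hw, α, hα, β, hβ, hαβ, ⟨0, by simp⟩, ⟨0, by simp⟩⟩
  | succ k ih =>
    rintro w ⟨z, hz, z', hz', γ, hγ, γ', hγ', hne, h1, h2⟩
    exact ⟨z, ih hz, z', ih hz', γ, hγ, γ', hγ', hne, h1, h2⟩

include hα hβ hαβ in
lemma step_mono' : Monotone (origamiStep U) :=
  monotone_nat_of_le_succ fun k => step_mono hα hβ hαβ k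

lemma step_subset (k : ℕ) : origamiStep U k ⊆ origami U := subset_iUnion (origamiStep U) k

lemma zero_mem_origami : (0 : ℂ) ∈ origami U := step_subset 0 (by left; rfl)
lemma one_mem_origami : (1 : ℂ) ∈ origami U := step_subset 0 (by right; rfl)

include hα hβ hαβ in
lemma origami_inter {z z' w : ℂ} (hz : z ∈ origami U) (hz' : z' ∈ origami U)
    {γ γ' : ℝ} (hγ : γ ∈ U) (hγ' : γ' ∈ U) (hne : γ ≠ γ')
    (h1 : w ∈ lineThru z γ) (h2 : w ∈ lineThru z' γ') : w ∈ origami U := by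
  obtain ⟨k1, hk1⟩ := mem_iUnion.1 hz
  obtain ⟨k2, hk2⟩ := mem_iUnion.1 hz'
  refine step_subset ((max k1 k2) + 1)
    ⟨z, step_mono' hα hβ hαβ (le_max_left k1 k2) hk1,
     z', step_mono' hα hβ hαβ (le_max_right k1 k2) hk2, γ, hγ, γ', hγ', hne, h1, h2⟩

end

section

variable {U : Set ℝ} (hU : U ⊆ Set.Ico 0 Real.pi) {α β : ℝ} (hα : α ∈ U) (hβ : β ∈ U)
  (hα0 : α ≠ 0) (hβ0 : β ≠ 0) (hαβ : α ≠ β)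

include hU hα hα0 in
lemma sin_pos' : 0 < Real.sin α := by
  obtain ⟨h1, h2⟩ := hU hα
  exact Real.sin_pos_of_pos_of_lt_pi (lt_of_le_of_ne h1 (Ne.symm hα0)) h2

include hU hα hβ hα0 hβ0 hαβ in
lemma sin_sub_ne : Real.sin (β - α) ≠ 0 := by
  obtain ⟨ha1, ha2⟩ := hU hα
  obtain ⟨hb1, hb2⟩ := hU hβ
  rcases lt_or_gt_of_ne hαβ with h | h
  · exact ne_of_gt (Real.sin_pos_of_pos_of_lt_pi (by linarith) (by linarith))
  · have : Real.sin (α - β) > 0 := Real.sin_pos_of_pos_of_lt_pi (by linarith) (by linarith)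
    rw [show β - α = -(α - β) by ring, Real.sin_neg]
    linarith

lemma proj_add (γ : ℝ) (z w : ℂ) : proj γ (z + w) = proj γ z + proj γ w := by
  simp only [proj, Complex.add_re, Complex.add_im]; ring

lemma proj_smul (γ : ℝ) (r : ℝ) (z : ℂ) : proj γ ((r : ℂ) * z) = r * proj γ z := by
  simp only [proj, Complex.mul_re, Complex.mul_im, Complex.ofReal_re, Complex.ofReal_im]; ring

lemma proj_real (γ : ℝ) (r : ℝ) : proj γ (r : ℂ) = r := by
  simp [proj]

include hU hα hβ hα0 hβ0 hαβ in
lemma e_spec : proj α (inter α β 0 1) = 0 ∧ proj β (inter α β 0 1) = 1 := by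
  have hsα := sin_pos' hU hα hα0
  have hsβ := sin_pos' hU hβ hβ0
  have hd := sin_sub_ne hU hα hβ hα0 hβ0 hαβ
  refine Classical.epsilon_spec (p := fun z : ℂ => proj α z = 0 ∧ proj β z = 1)
    ⟨((Real.sin β / Real.sin (β - α) * Real.cos α : ℝ) : ℂ)
      + ((Real.sin β / Real.sin (β - α) * Real.sin α : ℝ) : ℂ) * Complex.I, ?_, ?_⟩
  · simp only [proj, Complex.add_re, Complex.add_im, Complex.ofReal_re, Complex.ofReal_im,
      Complex.mul_re, Complex.mul_im, Complex.I_re, Complex.I_im]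
    field_simp
    ring
  · simp only [proj, Complex.add_re, Complex.add_im, Complex.ofReal_re, Complex.ofReal_im,
      Complex.mul_re, Complex.mul_im, Complex.I_re, Complex.I_im]
    field_simp
    rw [Real.sin_sub]
    ring

end

lemma ofReal_mul_expθ_re (E θ : ℝ) :
    (((E:ℝ):ℂ) * Complex.exp ((θ:ℂ) * Complex.I)).re = E * Real.cos θ := by
  rw [expθ]
  simp only [Complex.mul_re, Complex.add_re, Complex.add_im, Complex.mul_im,
    Complex.ofReal_re, Complex.ofReal_im, Complex.I_re, Complex.I_im]
  ring

lemma ofReal_mul_expθ_im (E θ : ℝ) :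
    (((E:ℝ):ℂ) * Complex.exp ((θ:ℂ) * Complex.I)).im = E * Real.sin θ := by
  rw [expθ]
  simp only [Complex.mul_re, Complex.add_re, Complex.add_im, Complex.mul_im,
    Complex.ofReal_re, Complex.ofReal_im, Complex.I_re, Complex.I_im]
  ring

section
variable {α β : ℝ} (hsα : Real.sin α ≠ 0) (hsβ : Real.sin β ≠ 0)
  (hd : Real.sin (β - α) ≠ 0)
  {e : ℂ} (h1 : proj α e = 0) (h2 : proj β e = 1)

include hsα hsβ hd h1 h2

lemma e_im : e.im = Real.sin α * Real.sin β / Real.sin (β - α) := by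
  unfold proj at h1 h2
  have h1' : e.re * Real.sin α = e.im * Real.cos α := by
    field_simp at h1; linarith
  have h2' : e.re * Real.sin β - e.im * Real.cos β = Real.sin β := by
    field_simp at h2; linarith
  rw [eq_div_iff hd, Real.sin_sub]
  linear_combination Real.sin α * h2' - Real.sin β * h1'

lemma e_re : e.re = Real.cos α * Real.sin β / Real.sin (β - α) := by
  have him := e_im hsα hsβ hd h1 h2
  unfold proj at h1
  have h1' : e.re * Real.sin α = e.im * Real.cos α := by
    field_simp at h1; linarith
  rw [him] at h1'
  have h1'' : e.re * Real.sin α * Real.sin (β - α) = Real.sin α * Real.sin β * Real.cos α := by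
    field_simp at h1'; linear_combination Real.sin α * h1'
  rw [eq_div_iff hd]
  apply mul_left_cancel₀ hsα
  linear_combination h1''

lemma e_im_ne : e.im ≠ 0 := by
  rw [e_im hsα hsβ hd h1 h2]
  exact div_ne_zero (mul_ne_zero hsα hsβ) hd

lemma e_exp : e = ((Real.sin β / Real.sin (β - α) : ℝ) : ℂ) * Complex.exp ((α:ℂ) * Complex.I) := by
  apply Complex.ext
  · rw [ofReal_mul_expθ_re, e_re hsα hsβ hd h1 h2]; ring
  · rw [ofReal_mul_expθ_im, e_im hsα hsβ hd h1 h2]; ring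

lemma e_sub_one_exp :
    e - 1 = ((Real.sin α / Real.sin (β - α) : ℝ) : ℂ) * Complex.exp ((β:ℂ) * Complex.I) := by
  apply Complex.ext
  · rw [Complex.sub_re, ofReal_mul_expθ_re, e_re hsα hsβ hd h1 h2, Complex.one_re]
    field_simp
    rw [Real.sin_sub]
    ring
  · rw [Complex.sub_im, ofReal_mul_expθ_im, e_im hsα hsβ hd h1 h2, Complex.one_im]
    ring

lemma e_quad :
    e ^ 2 + ((2 * (Real.cos α * Real.sin β / Real.sin (α - β)) : ℝ) : ℂ) * e
      + ((Real.sin β ^ 2 / Real.sin (α - β) ^ 2 : ℝ) : ℂ) = 0 := by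
  have hre := e_re hsα hsβ hd h1 h2
  have him := e_im hsα hsβ hd h1 h2
  have hab : Real.sin (α - β) = -Real.sin (β - α) := by
    rw [show α - β = -(β - α) by ring, Real.sin_neg]
  set B : ℝ := 2 * (Real.cos α * Real.sin β / Real.sin (α - β)) with hB
  set C : ℝ := Real.sin β ^ 2 / Real.sin (α - β) ^ 2 with hC
  have hB' : B = -(2 * (Real.cos α * Real.sin β / Real.sin (β - α))) := by
    rw [hB, hab, div_neg]; ring
  have hC' : C = Real.sin β ^ 2 / Real.sin (β - α) ^ 2 := by
    rw [hC, hab]; ring_nf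
  apply Complex.ext
  · simp only [Complex.add_re, Complex.add_im, pow_two, Complex.mul_re, Complex.mul_im,
      Complex.ofReal_re, Complex.ofReal_im, Complex.zero_re, Complex.zero_im]
    rw [hre, him, hB', hC']
    field_simp
    linear_combination (-(Real.sin β^2)) * Real.sin_sq_add_cos_sq α
  · simp only [Complex.add_re, Complex.add_im, pow_two, Complex.mul_re, Complex.mul_im,
      Complex.ofReal_re, Complex.ofReal_im, Complex.zero_re, Complex.zero_im]
    rw [hre, him, hB']
    field_simp
    ring
end

lemma quad_unique {e : ℂ} (him : e.im ≠ 0) {b c b' c' : ℝ}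
    (h : e ^ 2 + (b:ℂ) * e + (c:ℂ) = 0) (h' : e ^ 2 + (b':ℂ) * e + (c':ℂ) = 0) :
    b = b' ∧ c = c' := by
  have h2 : ((b:ℂ) - b') * e + ((c:ℂ) - c') = 0 := by linear_combination h - h'
  have him2 : (b - b') * e.im = 0 := by
    have := congrArg Complex.im h2
    simpa using this
  have hb : b = b' := by
    rcases mul_eq_zero.1 him2 with h | h
    · linarith
    · exact absurd h him
  refine ⟨hb, ?_⟩
  rw [hb] at h2
  have : ((c:ℂ)) = c' := by linear_combination h2
  exact_mod_cast this

lemma sins_identity {α β : ℝ} (hd : Real.sin (α - β) ≠ 0) :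
    Real.sin α ^ 2 / Real.sin (α - β) ^ 2
      = 1 + 2 * (Real.cos α * Real.sin β / Real.sin (α - β))
        + Real.sin β ^ 2 / Real.sin (α - β) ^ 2 := by
  have key : Real.sin α ^ 2 = Real.sin (α-β)^2 + 2*Real.cos α*Real.sin β*Real.sin (α-β)
      + Real.sin β ^2 := by
    rw [Real.sin_sub]
    nlinarith [Real.sin_sq_add_cos_sq β, Real.sin_sq_add_cos_sq α]
  rw [key]
  field_simp

lemma exp0 : Complex.exp (((0:ℝ):ℂ) * Complex.I) = 1 := by norm_num

section
variable {U : Set ℝ} (hU : U ⊆ Set.Ico 0 Real.pi) (h0 : (0:ℝ) ∈ U) {α β : ℝ}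
  (hα : α ∈ U) (hβ : β ∈ U) (hα0 : α ≠ 0) (hβ0 : β ≠ 0) (hαβ : α ≠ β)

include hU h0 hα hβ hα0 hβ0 hαβ

lemma zeroR : (0:ℝ) ∈ origamiR U := by
  show ((0:ℝ):ℂ) ∈ origami U
  rw [Complex.ofReal_zero]; exact zero_mem_origami

lemma oneR : (1:ℝ) ∈ origamiR U := by
  show ((1:ℝ):ℂ) ∈ origami U
  rw [Complex.ofReal_one]; exact one_mem_origami

lemma smul_mem {u : ℝ} (hu : u ∈ origamiR U) {z : ℂ} (hz : z ∈ origami U) :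
    (u:ℂ) * z ∈ origami U := by
  obtain ⟨k, hk⟩ := mem_iUnion.1 hz
  clear hz
  induction k generalizing z with
  | zero =>
    rcases hk with h | h
    · rw [h, mul_zero]; exact zero_mem_origami
    · rw [Set.mem_singleton_iff] at h
      rw [h, mul_one]; exact hu
  | succ k ih =>
    obtain ⟨z1, hz1, z2, hz2, γ, hγ, γ', hγ', hne, ⟨t1, ht1⟩, ⟨t2, ht2⟩⟩ := hk
    refine origami_inter hα hβ hαβ (ih hz1) (ih hz2) hγ hγ' hne
      ⟨u * t1, ?_⟩ ⟨u * t2, ?_⟩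
    · rw [ht1]; push_cast; ring
    · rw [ht2]; push_cast; ring

lemma mulR {u v : ℝ} (hu : u ∈ origamiR U) (hv : v ∈ origamiR U) :
    u * v ∈ origamiR U := by
  show ((u*v:ℝ):ℂ) ∈ origami U
  rw [Complex.ofReal_mul]
  exact smul_mem hU h0 hα hβ hα0 hβ0 hαβ hu hv

lemma projR_mem {z : ℂ} (hz : z ∈ origami U) {γ : ℝ} (hγ : γ ∈ U) (hγ0 : γ ≠ 0) :
    proj γ z ∈ origamiR U := by
  have hsγ : Real.sin γ ≠ 0 := (sin_pos' hU hγ hγ0).ne'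
  refine origami_inter hα hβ hαβ zero_mem_origami hz h0 hγ (Ne.symm hγ0)
    ⟨proj γ z, by rw [exp0]; ring⟩ ⟨-z.im / Real.sin γ, ?_⟩
  apply Complex.ext
  · rw [Complex.add_re, ofReal_mul_expθ_re, Complex.ofReal_re]
    unfold proj
    field_simp
    ring
  · rw [Complex.add_im, ofReal_mul_expθ_im, Complex.ofReal_im]
    field_simp
    ring

lemma combR {u v w : ℝ} (hu : u ∈ origamiR U) (hv : v ∈ origamiR U) (hw : w ∈ origamiR U) :
    u + w - v ∈ origamiR U := by
  have hsα : Real.sin α ≠ 0 := (sin_pos' hU hα hα0).ne'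
  have hsβ : Real.sin β ≠ 0 := (sin_pos' hU hβ hβ0).ne'
  have hd := sin_sub_ne hU hα hβ hα0 hβ0 hαβ
  obtain ⟨h1, h2⟩ := e_spec hU hα hβ hα0 hβ0 hαβ
  set e : ℂ := inter α β 0 1 with hedef
  have hE := e_exp hsα hsβ hd h1 h2
  have hE1 := e_sub_one_exp hsα hsβ hd h1 h2
  set E : ℝ := Real.sin β / Real.sin (β - α) with hEdef
  set F : ℝ := Real.sin α / Real.sin (β - α) with hFdef
  set z : ℂ := (u:ℂ) + ((v - u : ℝ):ℂ) * e with hz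
  have hzm : z ∈ origami U := by
    refine origami_inter hα hβ hαβ hu hv hα hβ hαβ
      ⟨(v - u) * E, ?_⟩
      ⟨(v - u) * F, ?_⟩
    · rw [hz]; push_cast; linear_combination ((v:ℂ) - u) * hE
    · rw [hz]; push_cast; linear_combination ((v:ℂ) - u) * hE1
  set p : ℂ := z + ((w - v : ℝ):ℂ) with hp
  have hpm : p ∈ origami U := by
    refine origami_inter hα hβ hαβ hzm hw h0 hβ (Ne.symm hβ0)
      ⟨w - v, by rw [hp, exp0]; push_cast; ring⟩
      ⟨(v - u) * F, ?_⟩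
    rw [hp, hz]; push_cast; linear_combination ((v:ℂ) - u) * hE1
  have hproj : proj α p = u + w - v := by
    rw [hp, proj_add, proj_real, hz, proj_add, proj_smul, proj_real, h1]
    ring
  have := projR_mem hU h0 hα hβ hα0 hβ0 hαβ hpm hα hα0
  rwa [hproj] at this

lemma addR {u v : ℝ} (hu : u ∈ origamiR U) (hv : v ∈ origamiR U) :
    u + v ∈ origamiR U := by
  have := combR hU h0 hα hβ hα0 hβ0 hαβ hu (zeroR hU h0 hα hβ hα0 hβ0 hαβ) hv
  simpa using this

lemma subR {u v : ℝ} (hu : u ∈ origamiR U) (hv : v ∈ origamiR U) :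
    u - v ∈ origamiR U := by
  have := combR hU h0 hα hβ hα0 hβ0 hαβ (zeroR hU h0 hα hβ hα0 hβ0 hαβ) hv hu
  simpa [add_comm] using this
  
lemma e_mem : inter α β 0 1 ∈ origami U := by
  have hsα : Real.sin α ≠ 0 := (sin_pos' hU hα hα0).ne'
  have hsβ : Real.sin β ≠ 0 := (sin_pos' hU hβ hβ0).ne'
  have hd := sin_sub_ne hU hα hβ hα0 hβ0 hαβ
  obtain ⟨h1, h2⟩ := e_spec hU hα hβ hα0 hβ0 hαβ
  have hE := e_exp hsα hsβ hd h1 h2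
  have hE1 := e_sub_one_exp hsα hsβ hd h1 h2
  set E : ℝ := Real.sin β / Real.sin (β - α) with hEdef
  set F : ℝ := Real.sin α / Real.sin (β - α) with hFdef
  refine origami_inter hα hβ hαβ zero_mem_origami one_mem_origami hα hβ hαβ
    ⟨E, by linear_combination hE⟩
    ⟨F, by linear_combination hE1⟩

lemma mem_of_coeff {p q : ℝ} (hp : p ∈ origamiR U) (hq : q ∈ origamiR U) :
    (p:ℂ) + (q:ℂ) * inter α β 0 1 ∈ origami U := by
  have hsα : Real.sin α ≠ 0 := (sin_pos' hU hα hα0).ne'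
  have hsβ : Real.sin β ≠ 0 := (sin_pos' hU hβ hβ0).ne'
  have hd := sin_sub_ne hU hα hβ hα0 hβ0 hαβ
  obtain ⟨h1, h2⟩ := e_spec hU hα hβ hα0 hβ0 hαβ
  have hE := e_exp hsα hsβ hd h1 h2
  have hE1 := e_sub_one_exp hsα hsβ hd h1 h2
  set E : ℝ := Real.sin β / Real.sin (β - α) with hEdef
  set F : ℝ := Real.sin α / Real.sin (β - α) with hFdef
  have hpq : ((p + q : ℝ):ℂ) ∈ origami U := addR hU h0 hα hβ hα0 hβ0 hαβ hp hq
  refine origami_inter hα hβ hαβ hp hpq hα hβ hαβ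
    ⟨q * E, by push_cast; linear_combination (q:ℂ) * hE⟩
    ⟨q * F, by push_cast; linear_combination (q:ℂ) * hE1⟩

end

section
variable {α β : ℝ} (hsα : Real.sin α ≠ 0) (hsβ : Real.sin β ≠ 0)
  (hd : Real.sin (β - α) ≠ 0)
  {e : ℂ} (h1 : proj α e = 0) (h2 : proj β e = 1)

include hsα hsβ hd h1 h2

lemma repr_eq (z : ℂ) :
    z = ((proj α z : ℝ):ℂ) + ((proj β z - proj α z : ℝ):ℂ) * e := by
  have hre := e_re hsα hsβ hd h1 h2
  have him := e_im hsα hsβ hd h1 h2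
  have hd2 : Real.sin β * Real.cos α - Real.cos β * Real.sin α ≠ 0 := by
    rwa [Real.sin_sub] at hd
  apply Complex.ext
  · simp only [Complex.add_re, Complex.mul_re, Complex.ofReal_re, Complex.ofReal_im,
      zero_mul, sub_zero]
    rw [hre]
    unfold proj
    field_simp
    rw [Real.sin_sub]
    ring
  · simp only [Complex.add_im, Complex.mul_im, Complex.ofReal_re, Complex.ofReal_im,
      zero_mul, add_zero, zero_add]
    rw [him]
    unfold proj
    rw [Real.sin_sub]
    field_simp [hd2]
    ring

end

theorem origami_ring_tfae (U : Set ℝ) (hU : U ⊆ Set.Ico 0 Real.pi) (h0 : (0 : ℝ) ∈ U)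
    (hcard : 3 ≤ U.encard) (α β : ℝ) (hα : α ∈ U) (hβ : β ∈ U)
    (hα0 : α ≠ 0) (hβ0 : β ≠ 0) (hαβ : α ≠ β) :
    List.TFAE [
      (∃ R : Subring ℂ, (R : Set ℂ) = origami U),
      (∃ b c : ℝ, b ∈ origamiR U ∧ c ∈ origamiR U ∧
        (inter α β 0 1) ^ 2 + (b : ℂ) * inter α β 0 1 + (c : ℂ) = 0),
      (Real.sin β ^ 2 / Real.sin (α - β) ^ 2 ∈ origamiR U ∧
        2 * (Real.cos α * Real.sin β / Real.sin (α - β)) ∈ origamiR U),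
      (Real.sin α ^ 2 / Real.sin (α - β) ^ 2 ∈ origamiR U ∧
        Real.sin β ^ 2 / Real.sin (α - β) ^ 2 ∈ origamiR U),
      (inter α β 0 1 * (1 - inter α β 0 1) ∈ origami U)
    ] := by
  have hsα : Real.sin α ≠ 0 := (sin_pos' hU hα hα0).ne'
  have hsβ : Real.sin β ≠ 0 := (sin_pos' hU hβ hβ0).ne'
  have hd := sin_sub_ne hU hα hβ hα0 hβ0 hαβ
  have hd' : Real.sin (α - β) ≠ 0 := by
    rw [show α - β = -(β - α) by ring, Real.sin_neg]; simpa using hd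
  obtain ⟨h1, h2⟩ := e_spec hU hα hβ hα0 hβ0 hαβ
  have hz0 := zeroR hU h0 hα hβ hα0 hβ0 hαβ
  have hz1 := oneR hU h0 hα hβ hα0 hβ0 hαβ
  have hadd : ∀ {u v : ℝ}, u ∈ origamiR U → v ∈ origamiR U → u + v ∈ origamiR U :=
    fun hu hv => addR hU h0 hα hβ hα0 hβ0 hαβ hu hv
  have hsub : ∀ {u v : ℝ}, u ∈ origamiR U → v ∈ origamiR U → u - v ∈ origamiR U :=
    fun hu hv => subR hU h0 hα hβ hα0 hβ0 hαβ hu hv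
  have hmul : ∀ {u v : ℝ}, u ∈ origamiR U → v ∈ origamiR U → u * v ∈ origamiR U :=
    fun hu hv => mulR hU h0 hα hβ hα0 hβ0 hαβ hu hv
  have hproj : ∀ {z : ℂ}, z ∈ origami U → ∀ {γ : ℝ}, γ ∈ U → γ ≠ 0 →
      proj γ z ∈ origamiR U :=
    fun {z} hz {γ} hγ hγ0 => projR_mem hU h0 hα hβ hα0 hβ0 hαβ hz hγ hγ0
  have hrepr := repr_eq hsα hsβ hd h1 h2
  tfae_have 1 → 5 := by
    rintro ⟨R, hR⟩
    have he : inter α β 0 1 ∈ (R : Set ℂ) := by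
      rw [hR]; exact e_mem hU h0 hα hβ hα0 hβ0 hαβ
    have : inter α β 0 1 * (1 - inter α β 0 1) ∈ (R : Set ℂ) :=
      R.mul_mem he (R.sub_mem R.one_mem he)
    rwa [hR] at this
  tfae_have 5 → 2 := by
    intro h5
    refine ⟨proj β (inter α β 0 1 * (1 - inter α β 0 1))
        - proj α (inter α β 0 1 * (1 - inter α β 0 1)) - 1,
      proj α (inter α β 0 1 * (1 - inter α β 0 1)),
      hsub (hsub (hproj h5 hβ hβ0) (hproj h5 hα hα0)) hz1, hproj h5 hα hα0, ?_⟩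
    have hrep := hrepr (inter α β 0 1 * (1 - inter α β 0 1))
    push_cast at hrep ⊢
    linear_combination -hrep
  tfae_have 2 → 3 := by
    rintro ⟨b, c, hb, hc, heq⟩
    obtain ⟨hbB, hcC⟩ := quad_unique (e_im_ne hsα hsβ hd h1 h2) heq
      (e_quad hsα hsβ hd h1 h2)
    exact ⟨hcC ▸ hc, hbB ▸ hb⟩
  tfae_have 3 → 2 := by
    rintro ⟨hC, hB⟩
    exact ⟨_, _, hB, hC, e_quad hsα hsβ hd h1 h2⟩
  tfae_have 3 → 4 := by
    rintro ⟨hC, hB⟩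
    refine ⟨?_, hC⟩
    rw [sins_identity hd']
    exact hadd (hadd hz1 hB) hC
  tfae_have 4 → 3 := by
    rintro ⟨hA, hC⟩
    refine ⟨hC, ?_⟩
    have hBeq : 2 * (Real.cos α * Real.sin β / Real.sin (α - β))
        = Real.sin α ^ 2 / Real.sin (α - β) ^ 2 - 1
          - Real.sin β ^ 2 / Real.sin (α - β) ^ 2 := by
      linear_combination (-1 : ℝ) * sins_identity hd'
    rw [hBeq]
    exact hsub (hsub hA hz1) hC
  tfae_have 2 → 1 := by
    rintro ⟨b, c, hb, hc, heq⟩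
    refine ⟨{
      carrier := {z : ℂ | ∃ p q : ℝ, p ∈ origamiR U ∧ q ∈ origamiR U ∧
        z = (p:ℂ) + (q:ℂ) * inter α β 0 1}
      one_mem' := ⟨1, 0, hz1, hz0, by push_cast; ring⟩
      zero_mem' := ⟨0, 0, hz0, hz0, by push_cast; ring⟩
      add_mem' := ?ha
      mul_mem' := ?hm
      neg_mem' := ?hn }, ?hs⟩
    case ha =>
      rintro x y ⟨p, q, hp, hq, rfl⟩ ⟨p', q', hp', hq', rfl⟩
      exact ⟨p + p', q + q', hadd hp hp', hadd hq hq', by push_cast; ring⟩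
    case hm =>
      rintro x y ⟨p, q, hp, hq, rfl⟩ ⟨p', q', hp', hq', rfl⟩
      refine ⟨p * p' - c * (q * q'), p * q' + q * p' - b * (q * q'),
        hsub (hmul hp hp') (hmul hc (hmul hq hq')),
        hsub (hadd (hmul hp hq') (hmul hq hp')) (hmul hb (hmul hq hq')), ?_⟩
      push_cast
      linear_combination ((q:ℂ) * (q':ℂ)) * heq
    case hn =>
      rintro x ⟨p, q, hp, hq, rfl⟩
      exact ⟨0 - p, 0 - q, hsub hz0 hp, hsub hz0 hq, by push_cast; ring⟩
    case hs =>
      ext z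
      constructor
      · rintro ⟨p, q, hp, hq, rfl⟩
        exact mem_of_coeff hU h0 hα hβ hα0 hβ0 hαβ hp hq
      · intro hz
        exact ⟨proj α z, proj β z - proj α z, hproj hz hα hα0,
          hsub (hproj hz hβ hβ0) (hproj hz hα hα0), hrepr z⟩
  tfae_finish
end
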